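/- If β is a real number with 0 < β < π and sin(π/4)·sin(π − (3/2)·β) = sin(β/2), then cos β = (√2 − 1)/2. -/
import Mathlib


open Real

/-- Coolsaet's equality for the tiling `S₁₆2` (Proposition 7.14): the solution with
`0 < β < π` satisfies `cos β = (√2 - 1)/2`. -/
theorem stmt_15 (β : ℝ) (h1 : 0 < β) (h2 : β < π)
    (h : Real.sin (π / 4) * Real.sin (π - 3 / 2 * β) = Real.sin (β / 2)) :
    Real.cos β = (Real.sqrt 2 - 1) / 2 := by
  have hpi := Real.pi_pos
  have hxpos : 0 < Real.sin (β / 2) :=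
    Real.sin_pos_of_pos_of_lt_pi (by linarith) (by linarith)
  rw [Real.sin_pi_sub, Real.sin_pi_div_four, show (3 : ℝ) / 2 * β = 3 * (β / 2) by ring,
    Real.sin_three_mul] at h
  have hs2 : Real.sqrt 2 ^ 2 = 2 := Real.sq_sqrt (by norm_num)
  have hs2pos : (0 : ℝ) < Real.sqrt 2 := Real.sqrt_pos.mpr (by norm_num)
  have hsq : Real.sin (β / 2) ^ 2 = (3 - Real.sqrt 2) / 4 := by
    have h' : Real.sin (β / 2) * (Real.sqrt 2 * (3 - 4 * Real.sin (β / 2) ^ 2) - 2) = 0 := by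
      nlinarith [h]
    rcases mul_eq_zero.mp h' with h0 | h0
    · linarith
    · nlinarith [h0]
  have hc : Real.cos (2 * (β / 2)) = 2 * Real.cos (β / 2) ^ 2 - 1 := Real.cos_two_mul _
  have hpy := Real.sin_sq_add_cos_sq (β / 2)
  have : β = 2 * (β / 2) := by ring
  rw [this, hc]
  nlinarith [hsq, hpy]
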